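/- If θ is a nonempty shifted skew diagram that is not a rim, then C(θ,p) = 0 for every integer p; moreover, for every integer p ≤ 0 one has C(θ,p) = 1 if θ = ∅ and C(θ,p) = 0 if θ ≠ ∅, and C(∅,p) = 0 for every integer p > 0. -/

import Mathlib

/-- `hcoef a b = Σ_{j=0}^{min(a,b)} (-1)^j 2^{a-j} binom(a,j)`; it is `0` when `b < 0`. -/
def hcoef (a : ℕ) (b : ℤ) : ℤ :=
  ∑ j ∈ Finset.range (a + 1),
    if (j : ℤ) ≤ b then (-1) ^ j * 2 ^ (a - j) * (a.choose j) else 0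

attribute [local instance] Classical.propDecidable

/-- The south-east corners of a finite set of boxes: boxes `(i,j)` such that
neither `(i+1,j)` nor `(i,j+1)` belongs to the set. -/
def seCorners (θ : Finset (ℤ × ℤ)) : Finset (ℤ × ℤ) :=
  θ.filter fun b => (b.1 + 1, b.2) ∉ θ ∧ (b.1, b.2 + 1) ∉ θ

/-- The south-east rim of `θ`: boxes `(i,j) ∈ θ` such that no box `(i',j') ∈ θ`
has `i' > i` and `j' > j`. -/
def seRim (θ : Finset (ℤ × ℤ)) : Finset (ℤ × ℤ) :=
  θ.filter fun b => ∀ b' ∈ θ, ¬ (b.1 < b'.1 ∧ b.2 < b'.2)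

/-- `d(θ)`: the number of boxes in the south-east rim of `θ`. -/
def dRim (θ : Finset (ℤ × ℤ)) : ℕ := (seRim θ).card

/-- `θ` is a rim if it equals its own south-east rim. -/
def IsRim (θ : Finset (ℤ × ℤ)) : Prop := θ = seRim θ

/-- Two boxes are adjacent (connected) if they share a side. -/
def Adjacent (b b' : ℤ × ℤ) : Prop := |b.1 - b'.1| + |b.2 - b'.2| = 1

/-- `b'` can be reached from `b` by a chain of adjacent boxes of `θ`. -/
def Reach (θ : Finset (ℤ × ℤ)) (b b' : ℤ × ℤ) : Prop :=
  Relation.ReflTransGen (fun x y => y ∈ θ ∧ Adjacent x y) b b'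

/-- The connected components of `θ`. -/
noncomputable def comps (θ : Finset (ℤ × ℤ)) : Finset (Finset (ℤ × ℤ)) :=
  θ.image fun b => θ.filter fun b' => Reach θ b b'

/-- `N(θ)`: the number of connected components of `θ`. -/
noncomputable def Ncomp (θ : Finset (ℤ × ℤ)) : ℕ := (comps θ).card

/-- `N⁻(θ) = max(N(θ) - 1, 0)`. -/
noncomputable def Nminus (θ : Finset (ℤ × ℤ)) : ℕ := Ncomp θ - 1

/-- `N'(θ)`: the number of connected components of `θ` containing no diagonal box. -/
noncomputable def Nprime (θ : Finset (ℤ × ℤ)) : ℕ :=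
  ((comps θ).filter fun c => ∀ b ∈ c, b.1 ≠ b.2).card

/-- `B(θ,p) = Σ_S (-1)^{|S|} h(N⁻(θ∖S), d(θ∖S) - p)`, the sum over subsets `S`
of the set of south-east corners of `θ`. -/
noncomputable def Bcoef (θ : Finset (ℤ × ℤ)) (p : ℤ) : ℤ :=
  ∑ S ∈ (seCorners θ).powerset,
    (-1) ^ S.card * hcoef (Nminus (θ \ S)) ((dRim (θ \ S) : ℤ) - p)

/-- `C(θ,p) = Σ_S (-1)^{|S|} h(N'(θ∖S), d(θ∖S) - p)`, the sum over subsets `S`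
of the set of south-east corners of `θ`. -/
noncomputable def Ccoef (θ : Finset (ℤ × ℤ)) (p : ℤ) : ℤ :=
  ∑ S ∈ (seCorners θ).powerset,
    (-1) ^ S.card * hcoef (Nprime (θ \ S)) ((dRim (θ \ S) : ℤ) - p)

/-- A strict partition with largest part at most `n`, encoded as a function
with `lam i = 0` for `i` beyond the length. -/
def IsStrictPartition (n : ℕ) (lam : ℤ → ℤ) : Prop :=
  lam 1 ≤ (n : ℤ) ∧ (∀ i : ℤ, 1 ≤ i → 0 ≤ lam i) ∧
  (∀ i : ℤ, 1 ≤ i → lam (i + 1) = 0 ∨ lam (i + 1) < lam i)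

/-- The shifted Young diagram `{(i,j) : 1 ≤ i ≤ ℓ, i ≤ j ≤ λ_i + i - 1}` of a
strict partition. -/
noncomputable def shiftedD (n : ℕ) (lam : ℤ → ℤ) : Finset (ℤ × ℤ) :=
  (Finset.Icc (1 : ℤ) (n : ℤ) ×ˢ Finset.Icc (1 : ℤ) (2 * (n : ℤ))).filter
    fun b => b.1 ≤ b.2 ∧ b.2 ≤ lam b.1 + b.1 - 1

/-- `θ` is a shifted skew diagram: `θ = ν/λ` for strict partitions `λ ⊆ ν`
with `ν_1 ≤ n`. -/
def IsShiftedSkewDiagram (n : ℕ) (θ : Finset (ℤ × ℤ)) : Prop :=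
  ∃ lam nu : ℤ → ℤ, IsStrictPartition n lam ∧ IsStrictPartition n nu ∧
    (∀ i : ℤ, 1 ≤ i → lam i ≤ nu i) ∧ θ = shiftedD n nu \ shiftedD n lam

open Finset

namespace CAux

lemma hcoef_neg {a : ℕ} {b : ℤ} (hb : b < 0) : hcoef a b = 0 := by
  unfold hcoef
  apply Finset.sum_eq_zero
  intro j _
  rw [if_neg]
  intro h
  have : (0:ℤ) ≤ (j:ℤ) := Int.ofNat_nonneg j
  omega

lemma hcoef_one {a : ℕ} {b : ℤ} (hb : (a:ℤ) ≤ b) : hcoef a b = 1 := by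
  unfold hcoef
  have h1 : ∀ j ∈ Finset.range (a+1),
      (if (j : ℤ) ≤ b then (-1:ℤ) ^ j * 2 ^ (a - j) * (a.choose j) else 0)
        = (-1:ℤ) ^ j * 2 ^ (a - j) * (a.choose j) := by
    intro j hj
    rw [if_pos]
    have := Finset.mem_range.1 hj
    have : (j:ℤ) ≤ (a:ℤ) := by exact_mod_cast Nat.le_of_lt_succ this
    omega
  rw [Finset.sum_congr rfl h1]
  have h := add_pow (-1 : ℤ) 2 a
  norm_num at h
  rw [← h]

end CAux
namespace CAux

/-- Abstract geometric properties of a shifted skew diagram. -/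
structure SkewLike (θ : Finset (ℤ × ℤ)) : Prop where
  shifted : ∀ b ∈ θ, b.1 ≤ b.2
  rowfill : ∀ i j j' j'' : ℤ, (i, j) ∈ θ → (i, j') ∈ θ → j ≤ j'' → j'' ≤ j' → (i, j'') ∈ θ
  g2row : ∀ i j i' j' : ℤ, (i, j) ∈ θ → (i', j') ∈ θ → i < i' → j ≤ j' → (i, j') ∈ θ
  colfill : ∀ i i' i'' j : ℤ, (i, j) ∈ θ → (i', j) ∈ θ → i ≤ i'' → i'' ≤ i' → (i'', j) ∈ θ
  g6 : ∀ i j i' j' : ℤ, (i, j) ∈ θ → (i', j') ∈ θ → i < i' → j < j' → (i + 1, j + 1) ∈ θ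
  g4 : ∀ r t : ℤ, (r - 1, t - 1) ∈ θ → (r, t) ∈ θ → r < t → (r, t - 1) ∈ θ

section geom

variable {n : ℕ} {lam nu : ℤ → ℤ}

/-- Monotonicity of strict partitions: `nu i' + i' ≤ nu i + i` for `1 ≤ i ≤ i'`
provided `nu i' > 0`. -/
lemma part_mono (h : IsStrictPartition n nu) :
    ∀ i i' : ℤ, 1 ≤ i → i ≤ i' → 0 < nu i' → nu i' + i' ≤ nu i + i := by
  intro i i' hi hii'
  obtain ⟨k, rfl⟩ : ∃ k : ℕ, i' = i + k := ⟨(i' - i).toNat, by omega⟩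
  clear hii'
  induction k with
  | zero => intro _; simp
  | succ m ih =>
    intro hpos
    have hcast : i + ((m : ℕ) + 1 : ℕ) = (i + m) + 1 := by push_cast; ring
    rw [hcast] at hpos ⊢
    have h1 : (1 : ℤ) ≤ i + m := by
      have : (0 : ℤ) ≤ (m : ℤ) := Int.ofNat_nonneg m
      omega
    rcases h.2.2 (i + m) h1 with h2 | h2
    · omega
    · have hk0 : 0 < nu (i + m) := lt_trans hpos h2
      have := ih hk0
      omega

lemma mem_skew_iff (hn : 0 < n) (hlam : IsStrictPartition n lam)
    (hnu : IsStrictPartition n nu) (hle : ∀ i : ℤ, 1 ≤ i → lam i ≤ nu i)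
    (i j : ℤ) :
    (i, j) ∈ shiftedD n nu \ shiftedD n lam ↔
      (1 ≤ i ∧ i ≤ j ∧ lam i + i - 1 < j ∧ j ≤ nu i + i - 1) := by
  simp only [Finset.mem_sdiff, shiftedD, Finset.mem_filter, Finset.mem_product,
    Finset.mem_Icc]
  constructor
  · rintro ⟨⟨⟨⟨hi1, hin⟩, hj1, hj2n⟩, hij, hjnu⟩, hnot⟩
    refine ⟨hi1, hij, ?_, hjnu⟩
    by_contra hcon
    push_neg at hcon
    exact hnot ⟨⟨⟨hi1, hin⟩, hj1, hj2n⟩, hij, hcon⟩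
  · rintro ⟨hi1, hij, hlamj, hjnu⟩
    have hnu_pos : 0 < nu i := by omega
    have hmono := part_mono hnu 1 i le_rfl hi1 hnu_pos
    have hin : i ≤ (n : ℤ) := by
      have := hnu.1; omega
    have hj2n : j ≤ 2 * (n : ℤ) := by
      have := hnu.1; omega
    have hj1 : 1 ≤ j := le_trans hi1 hij
    exact ⟨⟨⟨⟨hi1, hin⟩, hj1, hj2n⟩, hij, hjnu⟩, fun h => by omega⟩

lemma skewLike_of {θ : Finset (ℤ × ℤ)} (hn : 0 < n)
    (h : IsShiftedSkewDiagram n θ) : SkewLike θ := by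
  obtain ⟨lam, nu, hlam, hnu, hle, rfl⟩ := h
  have M := mem_skew_iff hn hlam hnu hle
  have lam_nonneg : ∀ i : ℤ, 1 ≤ i → 0 ≤ lam i := hlam.2.1
  -- lam monotone variant
  have lamM := part_mono hlam
  have nuM := part_mono hnu
  constructor
  · rintro ⟨i, j⟩ hb
    exact ((M i j).1 hb).2.1
  · intro i j j' j'' h1 h2 hle1 hle2
    rw [M] at h1 h2 ⊢
    omega
  · intro i j i' j' h1 h2 hii' hjj'
    rw [M] at h1 h2 ⊢
    have hnu' : 0 < nu i' := by omega
    have := nuM i i' (by omega) (by omega) hnu'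
    omega
  · intro i i' i'' j h1 h2 hle1 hle2
    rw [M] at h1 h2 ⊢
    have hnu' : 0 < nu i' := by omega
    have h3 := nuM i'' i' (by omega) (by omega) hnu'
    refine ⟨by omega, by omega, ?_, by omega⟩
    rcases eq_or_lt_of_le (lam_nonneg i'' (by omega)) with hz | hz
    · omega
    · have := lamM i i'' (by omega) (by omega) hz
      omega
  · intro i j i' j' h1 h2 hii' hjj'
    rw [M] at h1 h2 ⊢
    have hnu' : 0 < nu i' := by omega
    have h3 := nuM (i+1) i' (by omega) (by omega) hnu'
    refine ⟨by omega, by omega, ?_, by omega⟩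
    rcases eq_or_lt_of_le (lam_nonneg (i+1) (by omega)) with hz | hz
    · omega
    · have := lamM i (i+1) (by omega) (by omega) hz
      omega
  · intro r t h1 h2 hrt
    rw [M] at h1 h2 ⊢
    refine ⟨by omega, by omega, ?_, by omega⟩
    rcases eq_or_lt_of_le (lam_nonneg r (by omega)) with hz | hz
    · omega
    · have := lamM (r-1) r (by omega) (by omega) hz
      omega

end geom
end CAux
namespace CAux

section reach

variable {η : Finset (ℤ × ℤ)} {b b' x y : ℤ × ℤ}

lemma adj_symm (h : Adjacent x y) : Adjacent y x := by
  unfold Adjacent at *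
  rw [abs_sub_comm y.1 x.1, abs_sub_comm y.2 x.2]
  exact h

lemma adj_right (i t : ℤ) : Adjacent (i, t) (i, t + 1) := by
  have h1 : i - i = 0 := by ring
  have h2 : t - (t + 1) = -1 := by ring
  simp [Adjacent, h1, h2]

lemma adj_down (i t : ℤ) : Adjacent (i, t) (i + 1, t) := by
  have h1 : i - (i + 1) = -1 := by ring
  have h2 : t - t = 0 := by ring
  simp [Adjacent, h1, h2]

lemma adj_cases (h : Adjacent x y) :
    (x.1 = y.1 ∧ (x.2 = y.2 + 1 ∨ y.2 = x.2 + 1)) ∨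
    (x.2 = y.2 ∧ (x.1 = y.1 + 1 ∨ y.1 = x.1 + 1)) := by
  unfold Adjacent at h
  rcases abs_cases (x.1 - y.1) with ⟨h1, h1'⟩ | ⟨h1, h1'⟩ <;>
    rcases abs_cases (x.2 - y.2) with ⟨h2, h2'⟩ | ⟨h2, h2'⟩ <;>
      rw [h1, h2] at h <;> omega

lemma reach_mono {η' : Finset (ℤ × ℤ)} (hsub : η ⊆ η') (h : Reach η b b') :
    Reach η' b b' := by
  unfold Reach at *
  induction h with
  | refl => exact Relation.ReflTransGen.refl
  | tail _ hstep ih => exact ih.tail ⟨hsub hstep.1, hstep.2⟩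

lemma mem_of_reach (h : Reach η b x) : x = b ∨ x ∈ η := by
  induction h with
  | refl => exact Or.inl rfl
  | tail _ hstep _ => exact Or.inr hstep.1

lemma reach_trans (h : Reach η b x) (h' : Reach η x y) : Reach η b y :=
  Relation.ReflTransGen.trans h h'

lemma reach_symm (hb : b ∈ η) (h : Reach η b x) : Reach η x b := by
  induction h with
  | refl => exact Relation.ReflTransGen.refl
  | @tail c d hbc hstep ih =>
    have hc : c ∈ η := by
      rcases mem_of_reach hbc with h' | h'
      · exact h' ▸ hb
      · exact h'
    exact Relation.ReflTransGen.head ⟨hc, adj_symm hstep.2⟩ ih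

/-- The connected component of `b` in `η`. -/
noncomputable def comp (η : Finset (ℤ × ℤ)) (b : ℤ × ℤ) : Finset (ℤ × ℤ) :=
  η.filter fun b' => Reach η b b'

lemma comps_eq_image (η : Finset (ℤ × ℤ)) : comps η = η.image (comp η) := rfl

lemma mem_comp_iff : x ∈ comp η b ↔ x ∈ η ∧ Reach η b x := by
  simp [comp]

lemma mem_comp_self (hb : b ∈ η) : b ∈ comp η b :=
  mem_comp_iff.2 ⟨hb, Relation.ReflTransGen.refl⟩

lemma comp_eq (hb : b ∈ η) (h : Reach η b b') : comp η b = comp η b' := by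
  have hb' : b' ∈ η := by
    rcases mem_of_reach h with rfl | h' <;> assumption
  ext x
  simp only [mem_comp_iff]
  constructor
  · rintro ⟨hx, hr⟩
    exact ⟨hx, reach_trans (reach_symm hb h) hr⟩
  · rintro ⟨hx, hr⟩
    exact ⟨hx, reach_trans h hr⟩

lemma comps_mem_iff {C : Finset (ℤ × ℤ)} :
    C ∈ comps η ↔ ∃ b ∈ η, C = comp η b := by
  rw [comps_eq_image]
  simp only [Finset.mem_image]
  constructor
  · rintro ⟨b, hb, rfl⟩; exact ⟨b, hb, rfl⟩
  · rintro ⟨b, hb, rfl⟩; exact ⟨b, hb, rfl⟩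

lemma comps_eq_of_mem {C : Finset (ℤ × ℤ)} (hC : C ∈ comps η) (hx : x ∈ C) :
    C = comp η x ∧ x ∈ η := by
  obtain ⟨b, hb, rfl⟩ := comps_mem_iff.1 hC
  obtain ⟨hxη, hr⟩ := mem_comp_iff.1 hx
  exact ⟨comp_eq hb hr, hxη⟩

lemma comps_nonempty {C : Finset (ℤ × ℤ)} (hC : C ∈ comps η) : C.Nonempty := by
  obtain ⟨b, hb, rfl⟩ := comps_mem_iff.1 hC
  exact ⟨b, mem_comp_self hb⟩

lemma comps_eq_comps {C C' : Finset (ℤ × ℤ)} (hC : C ∈ comps η)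
    (hC' : C' ∈ comps η) (hx : x ∈ C) (hx' : x ∈ C') : C = C' := by
  rw [(comps_eq_of_mem hC hx).1, (comps_eq_of_mem hC' hx').1]

lemma reach_row {i j j' : ℤ} (hj : j ≤ j')
    (h : ∀ t, j < t → t ≤ j' → (i, t) ∈ η) : Reach η (i, j) (i, j') := by
  obtain ⟨k, rfl⟩ : ∃ k : ℕ, j' = j + k := ⟨(j' - j).toNat, by omega⟩
  clear hj
  induction k with
  | zero =>
    have hz : j + ((0 : ℕ) : ℤ) = j := by push_cast; ring
    rw [hz]; exact Relation.ReflTransGen.refl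
  | succ m ih =>
    have hcast : j + ((m : ℕ) + 1 : ℕ) = (j + m) + 1 := by push_cast; ring
    rw [hcast] at h ⊢
    have hm : (0:ℤ) ≤ (m:ℤ) := Int.ofNat_nonneg m
    have prev : Reach η (i, j) (i, j + m) := ih (fun t h1 h2 => h t h1 (by omega))
    exact prev.tail ⟨h (j + m + 1) (by omega) le_rfl, adj_right i (j + m)⟩

lemma reach_col {i i' j : ℤ} (hi : i ≤ i')
    (h : ∀ t, i < t → t ≤ i' → (t, j) ∈ η) : Reach η (i, j) (i', j) := by
  obtain ⟨k, rfl⟩ : ∃ k : ℕ, i' = i + k := ⟨(i' - i).toNat, by omega⟩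
  clear hi
  induction k with
  | zero =>
    have hz : i + ((0 : ℕ) : ℤ) = i := by push_cast; ring
    rw [hz]; exact Relation.ReflTransGen.refl
  | succ m ih =>
    have hcast : i + ((m : ℕ) + 1 : ℕ) = (i + m) + 1 := by push_cast; ring
    rw [hcast] at h ⊢
    have hm : (0:ℤ) ≤ (m:ℤ) := Int.ofNat_nonneg m
    have prev : Reach η (i, j) (i + m, j) := ih (fun t h1 h2 => h t h1 (by omega))
    exact prev.tail ⟨h (i + m + 1) (by omega) le_rfl, adj_down (i + m) j⟩

end reach
end CAux
namespace CAux

section skew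

variable {θ S : Finset (ℤ × ℤ)}

lemma mem_seCorners {c : ℤ × ℤ} :
    c ∈ seCorners θ ↔ c ∈ θ ∧ (c.1 + 1, c.2) ∉ θ ∧ (c.1, c.2 + 1) ∉ θ := by
  simp [seCorners]

lemma mem_seRim {c : ℤ × ℤ} :
    c ∈ seRim θ ↔ c ∈ θ ∧ ∀ b' ∈ θ, ¬ (c.1 < b'.1 ∧ c.2 < b'.2) := by
  simp [seRim]

lemma seRim_subset : seRim θ ⊆ θ := Finset.filter_subset _ _

lemma seCorners_subset : seCorners θ ⊆ θ := Finset.filter_subset _ _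

lemma corner_not_dominated (hsk : SkewLike θ) {c b' : ℤ × ℤ}
    (hc : c ∈ seCorners θ) (hb' : b' ∈ θ) : ¬ (c.1 < b'.1 ∧ c.2 < b'.2) := by
  rintro ⟨h1, h2⟩
  obtain ⟨hcθ, _, hright⟩ := mem_seCorners.1 hc
  have hx : (c.1, b'.2) ∈ θ := hsk.g2row c.1 c.2 b'.1 b'.2 hcθ hb' h1 (le_of_lt h2)
  exact hright (hsk.rowfill c.1 c.2 b'.2 (c.2 + 1) hcθ hx (by omega) (by omega))

/-- Dominated boxes can be reached inside `θ \ S` for any set `S` of corners. -/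
lemma reach_sdiff (hsk : SkewLike θ) (hS : S ⊆ seCorners θ) {b b' : ℤ × ℤ}
    (hb : b ∈ θ) (hb' : b' ∈ θ \ S) (h1 : b.1 < b'.1) (h2 : b.2 < b'.2) :
    Reach (θ \ S) b b' := by
  obtain ⟨hb'θ, hb'S⟩ := Finset.mem_sdiff.1 hb'
  have hcorner : (b.1, b'.2) ∈ θ := hsk.g2row b.1 b.2 b'.1 b'.2 hb hb'θ h1 (le_of_lt h2)
  have hrow : Reach (θ \ S) (b.1, b.2) (b.1, b'.2) := by
    apply reach_row (le_of_lt h2)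
    intro t ht1 ht2
    have htθ : (b.1, t) ∈ θ := hsk.rowfill b.1 b.2 b'.2 t hb hcorner (by omega) ht2
    rw [Finset.mem_sdiff]
    refine ⟨htθ, fun hmem => ?_⟩
    have := mem_seCorners.1 (hS hmem)
    rcases lt_or_eq_of_le ht2 with hlt | rfl
    · exact this.2.2 (hsk.rowfill b.1 b.2 b'.2 (t + 1) hb hcorner (by omega) (by omega))
    · exact this.2.1 (hsk.colfill b.1 b'.1 (b.1 + 1) b'.2 hcorner hb'θ (by omega) (by omega))
  have hcol : Reach (θ \ S) (b.1, b'.2) (b'.1, b'.2) := by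
    apply reach_col (le_of_lt h1)
    intro t ht1 ht2
    have htθ : (t, b'.2) ∈ θ := hsk.colfill b.1 b'.1 t b'.2 hcorner hb'θ (by omega) ht2
    rw [Finset.mem_sdiff]
    refine ⟨htθ, fun hmem => ?_⟩
    have := mem_seCorners.1 (hS hmem)
    rcases lt_or_eq_of_le ht2 with hlt | rfl
    · exact this.2.1 (hsk.colfill b.1 b'.1 (t + 1) b'.2 hcorner hb'θ (by omega) (by omega))
    · exact hb'S hmem
  exact reach_trans hrow hcol

lemma nprime_le_drim (hsk : SkewLike θ) (hS : S ⊆ seCorners θ) :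
    Nprime (θ \ S) ≤ dRim (θ \ S) := by
  set η := θ \ S with hη
  have key : ∀ C ∈ comps η, ∃ bb, bb ∈ C ∧ bb ∈ seRim η := by
    intro C hC
    obtain ⟨m, hm, hmax⟩ := Finset.exists_max_image C (fun b => b.1 + b.2)
      (comps_nonempty hC)
    obtain ⟨hCeq, hmη⟩ := comps_eq_of_mem hC hm
    refine ⟨m, hm, mem_seRim.2 ⟨hmη, ?_⟩⟩
    rintro b' hb' ⟨hd1, hd2⟩
    have hmθ : m ∈ θ := (Finset.mem_sdiff.1 hmη).1
    have hr : Reach η m b' := by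
      have : (m.1, m.2) = m := rfl
      exact reach_sdiff hsk hS hmθ hb' hd1 hd2
    have : b' ∈ C := by
      rw [hCeq]
      exact mem_comp_iff.2 ⟨hb', hr⟩
    have := hmax b' this
    omega
  have h1 : Nprime η ≤ Ncomp η := Finset.card_le_card (Finset.filter_subset _ _)
  have h2 : Ncomp η ≤ dRim η := by
    unfold Ncomp dRim
    apply Finset.card_le_card_of_injOn
      (fun C => if h : ∃ bb, bb ∈ C ∧ bb ∈ seRim η then h.choose else (0, 0))
    · intro C hC
      dsimp only; rw [dif_pos (key C hC)]
      exact (key C hC).choose_spec.2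
    · intro C hC C' hC' heq
      simp only [dif_pos (key C hC), dif_pos (key C' hC')] at heq
      exact comps_eq_comps hC hC' (key C hC).choose_spec.1
        (heq ▸ (key C' hC').choose_spec.1)
  omega

lemma exists_corner (hne : θ.Nonempty) : (seCorners θ).Nonempty := by
  obtain ⟨m, hm, hmax⟩ := Finset.exists_max_image θ (fun b => b.1 + b.2) hne
  refine ⟨m, mem_seCorners.2 ⟨hm, fun h => ?_, fun h => ?_⟩⟩
  · have := hmax _ h; simp at this <;> omega
  · have := hmax _ h; simp at this <;> omega

lemma exists_corner_diag (hsk : SkewLike θ) (hnr : ¬ IsRim θ) :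
    ∃ c ∈ seCorners θ, (c.1 - 1, c.2 - 1) ∈ θ := by
  have hsub : seRim θ ⊆ θ := seRim_subset
  have hex : ∃ b0 ∈ θ, b0 ∉ seRim θ := by
    by_contra hcon
    push_neg at hcon
    exact hnr (Finset.Subset.antisymm hcon hsub)
  obtain ⟨b0, hb0, hb0r⟩ := hex
  have hdom : ∃ b' ∈ θ, b0.1 < b'.1 ∧ b0.2 < b'.2 := by
    by_contra hcon
    push_neg at hcon
    exact hb0r (mem_seRim.2 ⟨hb0, fun b' hb' h => by
      rcases hcon b' hb' with h'; omega⟩)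
  obtain ⟨b', hb', hd1, hd2⟩ := hdom
  have hv0 : (b0.1 + 1, b0.2 + 1) ∈ θ := hsk.g6 b0.1 b0.2 b'.1 b'.2 hb0 hb' hd1 hd2
  set T := θ.filter (fun v => (v.1 - 1, v.2 - 1) ∈ θ) with hT
  have hTne : T.Nonempty := by
    refine ⟨(b0.1 + 1, b0.2 + 1), Finset.mem_filter.2 ⟨hv0, ?_⟩⟩
    simpa using hb0
  obtain ⟨v, hv, hvmax⟩ := Finset.exists_max_image T (fun b => b.1 + b.2) hTne
  obtain ⟨hvθ, hvw⟩ := Finset.mem_filter.1 hv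
  refine ⟨v, mem_seCorners.2 ⟨hvθ, fun h => ?_, fun h => ?_⟩, hvw⟩
  · -- (v.1 + 1, v.2) ∈ θ : down neighbour
    have hv2 : v.1 < v.2 := by
      have := hsk.shifted _ h; simp at this <;> omega
    have hw' : (v.1, v.2 - 1) ∈ θ := hsk.g4 v.1 v.2 hvw hvθ hv2
    have : (v.1 + 1, v.2) ∈ T := by
      refine Finset.mem_filter.2 ⟨h, ?_⟩
      simpa using hw'
    have := hvmax _ this
    simp at this <;> omega
  · -- (v.1, v.2 + 1) ∈ θ : right neighbour
    have hup : (v.1 - 1, v.2 + 1) ∈ θ :=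
      hsk.g2row (v.1 - 1) (v.2 - 1) v.1 (v.2 + 1) hvw h (by omega) (by omega)
    have hw' : (v.1 - 1, v.2) ∈ θ :=
      hsk.rowfill (v.1 - 1) (v.2 - 1) (v.2 + 1) v.2 hvw hup (by omega) (by omega)
    have : (v.1, v.2 + 1) ∈ T := by
      refine Finset.mem_filter.2 ⟨h, ?_⟩
      simpa using hw'
    have := hvmax _ this
    simp at this <;> omega

end skew
end CAux
namespace CAux

section pairing

variable {θ S : Finset (ℤ × ℤ)} {c : ℤ × ℤ}

lemma adj_mk {x y : ℤ × ℤ}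
    (h : (x.1 = y.1 ∧ (x.2 = y.2 + 1 ∨ y.2 = x.2 + 1)) ∨
         (x.2 = y.2 ∧ (x.1 = y.1 + 1 ∨ y.1 = x.1 + 1))) : Adjacent x y := by
  unfold Adjacent
  rcases h with ⟨h1, h2 | h2⟩ | ⟨h1, h2 | h2⟩
  · have e1 : x.1 - y.1 = 0 := by omega
    have e2 : x.2 - y.2 = 1 := by omega
    rw [e1, e2]; norm_num
  · have e1 : x.1 - y.1 = 0 := by omega
    have e2 : x.2 - y.2 = -1 := by omega
    rw [e1, e2]; norm_num
  · have e1 : x.1 - y.1 = 1 := by omega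
    have e2 : x.2 - y.2 = 0 := by omega
    rw [e1, e2]; norm_num
  · have e1 : x.1 - y.1 = -1 := by omega
    have e2 : x.2 - y.2 = 0 := by omega
    rw [e1, e2]; norm_num

lemma u_mem (hsk : SkewLike θ) (hc : c ∈ seCorners θ) (hw : (c.1 - 1, c.2 - 1) ∈ θ) :
    (c.1 - 1, c.2) ∈ θ := by
  have hcθ : (c.1, c.2) ∈ θ := (mem_seCorners.1 hc).1
  exact hsk.g2row (c.1 - 1) (c.2 - 1) c.1 c.2 hw hcθ (by omega) (by omega)

lemma u_notCorner (hc : c ∈ seCorners θ) : (c.1 - 1, c.2) ∉ seCorners θ := by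
  intro h
  have := (mem_seCorners.1 h).2.1
  have hcθ : (c.1, c.2) ∈ θ := (mem_seCorners.1 hc).1
  have e : (c.1 - 1 + 1, c.2) = (c.1, c.2) := by rw [Prod.mk.injEq]; omega
  rw [e] at this
  exact this hcθ

lemma w_notCorner (hsk : SkewLike θ) (hc : c ∈ seCorners θ)
    (hw : (c.1 - 1, c.2 - 1) ∈ θ) : (c.1 - 1, c.2 - 1) ∉ seCorners θ := by
  intro h
  have := (mem_seCorners.1 h).2.2
  have e : (c.1 - 1, c.2 - 1 + 1) = (c.1 - 1, c.2) := by rw [Prod.mk.injEq]; omega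
  rw [e] at this
  exact this (u_mem hsk hc hw)

lemma w_dom_unique (hsk : SkewLike θ) (hc : c ∈ seCorners θ) :
    ∀ b' ∈ θ, c.1 - 1 < b'.1 → c.2 - 1 < b'.2 → b' = c := by
  intro b' hb' h1 h2
  obtain ⟨hcθ, hcd, hcr⟩ := mem_seCorners.1 hc
  by_contra hne
  rcases lt_or_eq_of_le (show c.1 ≤ b'.1 by omega) with hi | hi
  · rcases lt_or_eq_of_le (show c.2 ≤ b'.2 by omega) with hj | hj
    · exact corner_not_dominated hsk hc hb' ⟨hi, hj⟩
    · exact hcd (hsk.colfill c.1 b'.1 (c.1 + 1) c.2 hcθ (by rw [hj]; exact hb')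
        (by omega) (by omega))
  · rcases lt_or_eq_of_le (show c.2 ≤ b'.2 by omega) with hj | hj
    · exact hcr (hsk.rowfill c.1 c.2 b'.2 (c.2 + 1) hcθ (by rw [hi]; exact hb')
        (by omega) (by omega))
    · exact hne (Prod.ext_iff.2 ⟨hi.symm, hj.symm⟩)

lemma shadow_replace (hsk : SkewLike θ) (hc : c ∈ seCorners θ)
    (hw : (c.1 - 1, c.2 - 1) ∈ θ) :
    ∀ b ∈ θ, b.1 < c.1 → b.2 < c.2 → b ≠ (c.1 - 1, c.2 - 1) →
      ∃ b'', b'' ∈ θ ∧ b'' ∉ seCorners θ ∧ b'' ≠ c ∧ b.1 < b''.1 ∧ b.2 < b''.2 := by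
  intro b hb h1 h2 hne
  have hcθ : (c.1, c.2) ∈ θ := (mem_seCorners.1 hc).1
  rcases lt_or_eq_of_le (show b.1 ≤ c.1 - 1 by omega) with hb1 | hb1
  · -- b.1 < c.1 - 1, use (b.1 + 1, c.2)
    have hx : (b.1, c.2) ∈ θ := hsk.g2row b.1 b.2 c.1 c.2 hb hcθ h1 (le_of_lt h2)
    have hy : (b.1 + 1, c.2) ∈ θ := hsk.colfill b.1 c.1 (b.1 + 1) c.2 hx hcθ
      (by omega) (by omega)
    have hz : (b.1 + 1 + 1, c.2) ∈ θ := hsk.colfill b.1 c.1 (b.1 + 1 + 1) c.2 hx hcθ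
      (by omega) (by omega)
    refine ⟨(b.1 + 1, c.2), hy, fun hcor => (mem_seCorners.1 hcor).2.1 hz, ?_, by omega, h2⟩
    intro he
    rw [Prod.ext_iff] at he
    omega
  · -- b.1 = c.1 - 1, so b.2 < c.2 - 1 and c is non-diagonal
    have hb2 : b.2 < c.2 - 1 := by
      rcases lt_or_eq_of_le (show b.2 ≤ c.2 - 1 by omega) with h | h
      · exact h
      · exfalso
        apply hne
        rw [Prod.ext_iff]
        exact ⟨by omega, by omega⟩
    have hdiag : c.1 < c.2 := by
      have := hsk.shifted b hb
      omega
    have hl : (c.1, c.2 - 1) ∈ θ := hsk.g4 c.1 c.2 hw hcθ hdiag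
    refine ⟨(c.1, c.2 - 1), hl, fun hcor => ?_, fun he => ?_, by omega, by omega⟩
    · have := (mem_seCorners.1 hcor).2.2
      have e : (c.1, c.2 - 1 + 1) = (c.1, c.2) := by rw [Prod.mk.injEq]; omega
      rw [e] at this
      exact this hcθ
    · rw [Prod.ext_iff] at he
      omega

lemma nbr_of_c (hc : c ∈ seCorners θ) :
    ∀ x ∈ θ, Adjacent x c → x = (c.1 - 1, c.2) ∨ x = (c.1, c.2 - 1) := by
  intro x hx hadj
  obtain ⟨hcθ, hcd, hcr⟩ := mem_seCorners.1 hc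
  rcases adj_cases hadj with ⟨h1, h2 | h2⟩ | ⟨h1, h2 | h2⟩
  · exfalso; apply hcr
    have e : (c.1, c.2 + 1) = x := by rw [Prod.ext_iff]; exact ⟨by omega, by omega⟩
    rw [e]; exact hx
  · right; rw [Prod.ext_iff]; exact ⟨by omega, by omega⟩
  · exfalso; apply hcd
    have e : (c.1 + 1, c.2) = x := by rw [Prod.ext_iff]; exact ⟨by omega, by omega⟩
    rw [e]; exact hx
  · left; rw [Prod.ext_iff]; exact ⟨by omega, by omega⟩

end pairing
end CAux
namespace CAux

section pairing2

variable {θ S : Finset (ℤ × ℤ)} {c : ℤ × ℤ}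

lemma dRim_erase (hsk : SkewLike θ) (hc : c ∈ seCorners θ)
    (hw : (c.1 - 1, c.2 - 1) ∈ θ) (hS : S ⊆ seCorners θ) (hcS : c ∉ S) :
    dRim ((θ \ S).erase c) = dRim (θ \ S) := by
  set η := θ \ S with hηdef
  set w : ℤ × ℤ := (c.1 - 1, c.2 - 1) with hwdef
  have hηθ : η ⊆ θ := Finset.sdiff_subset
  have hcη : c ∈ η := Finset.mem_sdiff.2 ⟨(mem_seCorners.1 hc).1, hcS⟩
  have hwη : w ∈ η := Finset.mem_sdiff.2 ⟨hw, fun h => w_notCorner hsk hc hw (hS h)⟩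
  have hwc : w ≠ c := by
    intro h; rw [hwdef, Prod.ext_iff] at h; omega
  have hcrim : c ∈ seRim η :=
    mem_seRim.2 ⟨hcη, fun b' hb' => corner_not_dominated hsk hc (hηθ hb')⟩
  have hwnrim : w ∉ seRim η := by
    intro h
    exact (mem_seRim.1 h).2 c hcη ⟨by show c.1 - 1 < c.1; omega,
      by show c.2 - 1 < c.2; omega⟩
  have hset : seRim (η.erase c) = insert w ((seRim η).erase c) := by
    ext x
    simp only [Finset.mem_insert, Finset.mem_erase]
    constructor
    · intro hx
      obtain ⟨hxmem, hxnd⟩ := mem_seRim.1 hx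
      obtain ⟨hxc, hxη⟩ := Finset.mem_erase.1 hxmem
      by_cases hxw : x = w
      · left; exact hxw
      · right
        refine ⟨hxc, mem_seRim.2 ⟨hxη, ?_⟩⟩
        intro b' hb' hdom
        by_cases hbc : b' = c
        · rw [hbc] at hdom
          have hxθ : x ∈ θ := hηθ hxη
          obtain ⟨b'', hb''θ, hb''nc, hb''ne, hd1, hd2⟩ :=
            shadow_replace hsk hc hw x hxθ hdom.1 hdom.2 hxw
          have hb''η : b'' ∈ η.erase c := Finset.mem_erase.2 ⟨hb''ne,
            Finset.mem_sdiff.2 ⟨hb''θ, fun h => hb''nc (hS h)⟩⟩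
          exact hxnd b'' hb''η ⟨hd1, hd2⟩
        · exact hxnd b' (Finset.mem_erase.2 ⟨hbc, hb'⟩) hdom
    · rintro (rfl | ⟨hxc, hxrim⟩)
      · refine mem_seRim.2 ⟨Finset.mem_erase.2 ⟨hwc, hwη⟩, ?_⟩
        intro b' hb' hdom
        obtain ⟨hbc, hbη⟩ := Finset.mem_erase.1 hb'
        have h1 : c.1 - 1 < b'.1 := hdom.1
        have h2 : c.2 - 1 < b'.2 := hdom.2
        exact hbc (w_dom_unique hsk hc b' (hηθ hbη) h1 h2)
      · obtain ⟨hxη, hxnd⟩ := mem_seRim.1 hxrim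
        refine mem_seRim.2 ⟨Finset.mem_erase.2 ⟨hxc, hxη⟩, ?_⟩
        intro b' hb' hdom
        exact hxnd b' (Finset.erase_subset _ _ hb') hdom
  have hpos : 0 < (seRim η).card := Finset.card_pos.2 ⟨c, hcrim⟩
  unfold dRim
  rw [hset, Finset.card_insert_of_notMem (fun h => hwnrim (Finset.mem_erase.1 h).2),
    Finset.card_erase_of_mem hcrim]
  omega

lemma reach_erase (hsk : SkewLike θ) (hc : c ∈ seCorners θ)
    (hw : (c.1 - 1, c.2 - 1) ∈ θ) (hS : S ⊆ seCorners θ)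
    {b x : ℤ × ℤ} (hb : b ∈ (θ \ S).erase c) (hx : x ∈ (θ \ S).erase c)
    (h : Reach (θ \ S) b x) : Reach ((θ \ S).erase c) b x := by
  set η := θ \ S with hηdef
  set w : ℤ × ℤ := (c.1 - 1, c.2 - 1) with hwdef
  set u : ℤ × ℤ := (c.1 - 1, c.2) with hudef
  set l : ℤ × ℤ := (c.1, c.2 - 1) with hldef
  have hηθ : η ⊆ θ := Finset.sdiff_subset
  have hwη' : w ∈ η.erase c := by
    refine Finset.mem_erase.2 ⟨fun h => ?_, Finset.mem_sdiff.2
      ⟨hw, fun h => w_notCorner hsk hc hw (hS h)⟩⟩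
    rw [hwdef, Prod.ext_iff] at h; omega
  have huη' : u ∈ η.erase c := by
    refine Finset.mem_erase.2 ⟨fun h => ?_, Finset.mem_sdiff.2
      ⟨u_mem hsk hc hw, fun h => u_notCorner hc (hS h)⟩⟩
    rw [hudef, Prod.ext_iff] at h; omega
  have adj_uw : Adjacent u w := adj_mk (Or.inl ⟨rfl, Or.inl (by show c.2 = c.2 - 1 + 1; omega)⟩)
  have adj_wl : Adjacent w l := adj_mk (Or.inr ⟨rfl, Or.inr (by show c.1 = c.1 - 1 + 1; omega)⟩)
  have hbc : b ≠ c := (Finset.mem_erase.1 hb).1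
  have hxc : x ≠ c := (Finset.mem_erase.1 hx).1
  have hnadjcc : ¬ Adjacent c c := by unfold Adjacent; simp
  suffices main : Reach (η.erase c) b (if x = c then u else x) by
    rw [if_neg hxc] at main; exact main
  clear hx hxc
  induction h with
  | refl => rw [if_neg hbc]; exact Relation.ReflTransGen.refl
  | @tail y z hby hstep ih =>
    have hyη : y ∈ η := by
      rcases mem_of_reach hby with h' | h'
      · rw [h']; exact (Finset.mem_erase.1 hb).2
      · exact h'
    by_cases hzc : z = c
    · rw [if_pos hzc]
      rw [hzc] at hstep
      have hyne : y ≠ c := fun h => hnadjcc (h ▸ hstep.2)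
      rw [if_neg hyne] at ih
      rcases nbr_of_c hc y (hηθ hyη) hstep.2 with h' | h'
      · rw [← hudef] at h'; subst h'; exact ih
      · rw [← hldef] at h'; subst h'
        exact (ih.tail ⟨hwη', adj_symm adj_wl⟩).tail ⟨huη', adj_symm adj_uw⟩
    · rw [if_neg hzc]
      by_cases hyc : y = c
      · rw [if_pos hyc] at ih
        rw [hyc] at hstep
        have hzθ : z ∈ θ := hηθ hstep.1
        rcases nbr_of_c hc z hzθ (adj_symm hstep.2) with h' | h'
        · rw [← hudef] at h'; subst h'; exact ih
        · rw [← hldef] at h'; subst h'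
          have hlη' : l ∈ η.erase c := Finset.mem_erase.2 ⟨hzc, hstep.1⟩
          exact (ih.tail ⟨hwη', adj_uw⟩).tail ⟨hlη', adj_wl⟩
      · rw [if_neg hyc] at ih
        exact ih.tail ⟨Finset.mem_erase.2 ⟨hzc, hstep.1⟩, hstep.2⟩

lemma comp_erase (hsk : SkewLike θ) (hc : c ∈ seCorners θ)
    (hw : (c.1 - 1, c.2 - 1) ∈ θ) (hS : S ⊆ seCorners θ)
    {b : ℤ × ℤ} (hb : b ∈ (θ \ S).erase c) :
    comp ((θ \ S).erase c) b = (comp (θ \ S) b).erase c := by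
  set η := θ \ S with hηdef
  ext x
  simp only [mem_comp_iff, Finset.mem_erase]
  constructor
  · rintro ⟨⟨hxc, hxη⟩, hr⟩
    exact ⟨hxc, hxη, reach_mono (Finset.erase_subset _ _) hr⟩
  · rintro ⟨hxc, hxη, hr⟩
    exact ⟨⟨hxc, hxη⟩, reach_erase hsk hc hw hS hb
      (Finset.mem_erase.2 ⟨hxc, hxη⟩) hr⟩

lemma reach_c_u (hsk : SkewLike θ) (hc : c ∈ seCorners θ)
    (hw : (c.1 - 1, c.2 - 1) ∈ θ) (hS : S ⊆ seCorners θ) :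
    Reach (θ \ S) c (c.1 - 1, c.2) := by
  have huη : (c.1 - 1, c.2) ∈ θ \ S := Finset.mem_sdiff.2
    ⟨u_mem hsk hc hw, fun h => u_notCorner hc (hS h)⟩
  refine Relation.ReflTransGen.single ⟨huη, ?_⟩
  exact adj_mk (Or.inr ⟨rfl, Or.inl (by show c.1 = c.1 - 1 + 1; omega)⟩)

lemma comps_erase (hsk : SkewLike θ) (hc : c ∈ seCorners θ)
    (hw : (c.1 - 1, c.2 - 1) ∈ θ) (hS : S ⊆ seCorners θ) (hcS : c ∉ S) :
    comps ((θ \ S).erase c) = (comps (θ \ S)).image (fun C => C.erase c) := by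
  set η := θ \ S with hηdef
  have hcη : c ∈ η := Finset.mem_sdiff.2 ⟨(mem_seCorners.1 hc).1, hcS⟩
  have huη' : (c.1 - 1, c.2) ∈ η.erase c := by
    refine Finset.mem_erase.2 ⟨fun h => ?_, Finset.mem_sdiff.2
      ⟨u_mem hsk hc hw, fun h => u_notCorner hc (hS h)⟩⟩
    rw [Prod.ext_iff] at h
    simp at h
  ext D
  rw [comps_mem_iff, Finset.mem_image]
  constructor
  · rintro ⟨b, hb, rfl⟩
    refine ⟨comp η b, comps_mem_iff.2 ⟨b, Finset.mem_of_mem_erase hb, rfl⟩, ?_⟩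
    rw [comp_erase hsk hc hw hS hb]
  · rintro ⟨C, hC, rfl⟩
    obtain ⟨b, hb, rfl⟩ := comps_mem_iff.1 hC
    by_cases hbc : b = c
    · subst hbc
      refine ⟨(b.1 - 1, b.2), huη', ?_⟩
      rw [comp_erase hsk hc hw hS huη', comp_eq hcη (reach_c_u hsk hc hw hS)]
    · refine ⟨b, Finset.mem_erase.2 ⟨hbc, hb⟩, ?_⟩
      rw [comp_erase hsk hc hw hS (Finset.mem_erase.2 ⟨hbc, hb⟩)]

lemma nprime_erase (hsk : SkewLike θ) (hc : c ∈ seCorners θ)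
    (hw : (c.1 - 1, c.2 - 1) ∈ θ) (hS : S ⊆ seCorners θ) (hcS : c ∉ S) :
    Nprime ((θ \ S).erase c) = Nprime (θ \ S) := by
  set η := θ \ S with hηdef
  have hcη : c ∈ η := Finset.mem_sdiff.2 ⟨(mem_seCorners.1 hc).1, hcS⟩
  have huη : (c.1 - 1, c.2) ∈ η := Finset.mem_sdiff.2
    ⟨u_mem hsk hc hw, fun h => u_notCorner hc (hS h)⟩
  have hwη : (c.1 - 1, c.2 - 1) ∈ η := Finset.mem_sdiff.2
    ⟨hw, fun h => w_notCorner hsk hc hw (hS h)⟩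
  have huc : ((c.1 - 1, c.2) : ℤ × ℤ) ≠ c := by
    intro h; rw [Prod.ext_iff] at h; simp at h
  have hwc : ((c.1 - 1, c.2 - 1) : ℤ × ℤ) ≠ c := by
    intro h; rw [Prod.ext_iff] at h; simp at h
  -- the member `u` of the component of `c`
  have hu_in_comp : ∀ C ∈ comps η, c ∈ C → (c.1 - 1, c.2) ∈ C := by
    intro C hC hcC
    rw [(comps_eq_of_mem hC hcC).1]
    exact mem_comp_iff.2 ⟨huη, reach_c_u hsk hc hw hS⟩
  have hw_in_comp : ∀ C ∈ comps η, c ∈ C → (c.1 - 1, c.2 - 1) ∈ C := by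
    intro C hC hcC
    rw [(comps_eq_of_mem hC hcC).1]
    refine mem_comp_iff.2 ⟨hwη, ?_⟩
    refine (reach_c_u hsk hc hw hS).tail ⟨hwη, ?_⟩
    exact adj_mk (Or.inl ⟨rfl, Or.inl (by show c.2 = c.2 - 1 + 1; omega)⟩)
  have hinj : Set.InjOn (fun C : Finset (ℤ × ℤ) => C.erase c) (comps η) := by
    intro C hC C' hC' heq
    simp only at heq
    by_cases h1 : c ∈ C
    · have hu1 : (c.1 - 1, c.2) ∈ C.erase c :=
        Finset.mem_erase.2 ⟨huc, hu_in_comp C hC h1⟩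
      have hu2 : (c.1 - 1, c.2) ∈ C' := Finset.mem_of_mem_erase (heq ▸ hu1)
      exact comps_eq_comps hC hC' (Finset.mem_of_mem_erase hu1) hu2
    · rw [Finset.erase_eq_of_notMem h1] at heq
      obtain ⟨x, hx⟩ := comps_nonempty hC
      have hx' : x ∈ C' := Finset.mem_of_mem_erase (heq ▸ hx)
      exact comps_eq_comps hC hC' hx hx'
  have hpred : ∀ C ∈ comps η,
      ((∀ b ∈ C.erase c, b.1 ≠ b.2) ↔ (∀ b ∈ C, b.1 ≠ b.2)) := by
    intro C hC
    constructor
    · intro h b hb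
      by_cases hbc : b = c
      · rw [hbc]
        intro hdiag'
        have hwC : (c.1 - 1, c.2 - 1) ∈ C.erase c :=
          Finset.mem_erase.2 ⟨hwc, hw_in_comp C hC (hbc ▸ hb)⟩
        have := h _ hwC
        simp at this
        omega
      · exact h b (Finset.mem_erase.2 ⟨hbc, hb⟩)
    · intro h b hb
      exact h b (Finset.mem_of_mem_erase hb)
  unfold Nprime
  rw [comps_erase hsk hc hw hS hcS, Finset.filter_image]
  rw [Finset.card_image_of_injOn (hinj.mono (Finset.filter_subset _ _))]
  congr 1
  apply Finset.filter_congr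
  intro C hC
  simpa using hpred C hC
end pairing2
end CAux
namespace CAux

lemma Ccoef_empty (p : ℤ) : Ccoef ∅ p = hcoef 0 (-p) := by
  unfold Ccoef
  rw [show seCorners (∅ : Finset (ℤ × ℤ)) = ∅ from Finset.filter_empty _,
    Finset.powerset_empty, Finset.sum_singleton]
  have h1 : (∅ : Finset (ℤ × ℤ)) \ ∅ = ∅ := by simp
  rw [h1]
  have h2 : Nprime (∅ : Finset (ℤ × ℤ)) = 0 := by
    unfold Nprime comps
    simp
  have h3 : dRim (∅ : Finset (ℤ × ℤ)) = 0 := by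
    unfold dRim seRim
    simp
  rw [h2, h3]
  simp

lemma sdiff_insert_eq_erase (θ t : Finset (ℤ × ℤ)) (c : ℤ × ℤ) :
    θ \ insert c t = (θ \ t).erase c := by
  ext x
  simp only [Finset.mem_sdiff, Finset.mem_insert, Finset.mem_erase]
  tauto

end CAux

theorem Ccoef_basic (n : ℕ) (hn : 0 < n) (θ : Finset (ℤ × ℤ))
    (hθ : IsShiftedSkewDiagram n θ) :
    (θ.Nonempty → ¬ IsRim θ → ∀ p : ℤ, Ccoef θ p = 0) ∧
    (∀ p : ℤ, p ≤ 0 → Ccoef θ p = if θ = (∅ : Finset (ℤ × ℤ)) then 1 else 0) ∧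
    (∀ p : ℤ, 0 < p → Ccoef (∅ : Finset (ℤ × ℤ)) p = 0) := by
  have hsk : CAux.SkewLike θ := CAux.skewLike_of hn hθ
  refine ⟨?_, ?_, ?_⟩
  · -- not a rim : all p
    intro hne hnr p
    obtain ⟨c, hc, hw⟩ := CAux.exists_corner_diag hsk hnr
    unfold Ccoef
    rw [show (seCorners θ).powerset = (insert c ((seCorners θ).erase c)).powerset from by
      rw [Finset.insert_erase hc]]
    rw [Finset.sum_powerset_insert (Finset.notMem_erase c (seCorners θ))]
    rw [← Finset.sum_add_distrib]
    apply Finset.sum_eq_zero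
    intro t ht
    have htsub : t ⊆ (seCorners θ).erase c := Finset.mem_powerset.1 ht
    have htK : t ⊆ seCorners θ := htsub.trans (Finset.erase_subset _ _)
    have hct : c ∉ t := fun h => Finset.notMem_erase c (seCorners θ) (htsub h)
    have hsd : θ \ insert c t = (θ \ t).erase c := CAux.sdiff_insert_eq_erase θ t c
    rw [hsd, CAux.nprime_erase hsk hc hw htK hct, CAux.dRim_erase hsk hc hw htK hct,
      Finset.card_insert_of_notMem hct]
    ring
  · -- p ≤ 0
    intro p hp
    by_cases hemp : θ = ∅
    · rw [if_pos hemp, hemp, CAux.Ccoef_empty]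
      exact CAux.hcoef_one (by push_cast; omega)
    · rw [if_neg hemp]
      have hne : θ.Nonempty := Finset.nonempty_iff_ne_empty.2 hemp
      unfold Ccoef
      have hterm : ∀ S ∈ (seCorners θ).powerset,
          (-1 : ℤ) ^ S.card * hcoef (Nprime (θ \ S)) ((dRim (θ \ S) : ℤ) - p)
            = (-1 : ℤ) ^ S.card := by
        intro S hS
        have h1 := CAux.nprime_le_drim hsk (Finset.mem_powerset.1 hS)
        rw [CAux.hcoef_one (by push_cast; omega), mul_one]
      rw [Finset.sum_congr rfl hterm, Finset.sum_powerset_neg_one_pow_card, if_neg]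
      exact Finset.nonempty_iff_ne_empty.1 (CAux.exists_corner hne)
  · -- empty diagram, p > 0
    intro p hp
    rw [CAux.Ccoef_empty]
    exact CAux.hcoef_neg (by omega)
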